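/- Let G=(V,E) be an undirected graph on V={1,...,N}, and for each node i let f_i : R^n -> R, h_i : R^n -> R^{m_i^E}, g_i : R^n -> R^{m_i^I} be C^2 functions. Then for every i, every x in R^{Nn}, every choice of multipliers and positive penalty parameters, the gradients with respect to the block x_i of the global and of the i-th local augmented Lagrangian exist and coincide: grad_{x_i} L_p(x,theta) = grad_{x_i} Ltilde_i(x_{N_i}, theta_{N_i}). -/

import Mathlib

open scoped RealInnerProductSpace

/-- Componentwise penalty term `1ᵀ q_c(a,b)` where
`q_c(a,b) = (1/(2c)) (max{0, a + c b}² - a²)`. -/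
noncomputable def qpen {m : ℕ} (c : ℝ) (a b : EuclideanSpace ℝ (Fin m)) : ℝ :=
  ∑ k, (1 / (2 * c)) * ((max 0 (a k + c * b k)) ^ 2 - (a k) ^ 2)

/-- For every node `i` and every point, the function of the block `x i` obtained from the
global augmented Lagrangian and the `i`-th local augmented Lagrangian are both differentiable
at `x i` and have the same gradient there. -/

lemma hasDerivAt_max_zero_sq (t : ℝ) :
    HasDerivAt (fun s : ℝ => max 0 s ^ 2) (2 * max 0 t) t := by
  rcases lt_trichotomy t 0 with ht | rfl | ht
  · have he : (fun s : ℝ => max 0 s ^ 2) =ᶠ[nhds t] fun _ => (0 : ℝ) := by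
      filter_upwards [Iio_mem_nhds ht] with s hs
      simp [max_eq_left (le_of_lt (Set.mem_Iio.mp hs))]
    have h0 : HasDerivAt (fun _ : ℝ => (0 : ℝ)) 0 t := hasDerivAt_const t 0
    simpa [max_eq_left ht.le] using h0.congr_of_eventuallyEq he
  · rw [hasDerivAt_iff_isLittleO]
    simp only [max_self, sub_zero, smul_eq_mul, mul_zero, ne_eq, OfNat.ofNat_ne_zero,
      not_false_eq_true, zero_pow, sub_zero]
    rw [Asymptotics.isLittleO_iff]
    intro c hc
    filter_upwards [Metric.ball_mem_nhds (0 : ℝ) hc] with s hs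
    have h1 : max 0 s ≤ |s| := max_le (abs_nonneg s) (le_abs_self s)
    have h2 : (0 : ℝ) ≤ max 0 s := le_max_left 0 s
    have h3 : |s| < c := by simpa [Real.dist_eq] using hs
    rw [Real.norm_eq_abs, abs_of_nonneg (by positivity), Real.norm_eq_abs]
    nlinarith [abs_nonneg s]
  · have he : (fun s : ℝ => max 0 s ^ 2) =ᶠ[nhds t] fun s => s ^ 2 := by
      filter_upwards [Ioi_mem_nhds ht] with s hs
      simp [max_eq_right (le_of_lt (Set.mem_Ioi.mp hs))]
    have h0 : HasDerivAt (fun s : ℝ => s ^ 2) (2 * t) t := by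
      simpa using hasDerivAt_pow 2 t
    simpa [max_eq_right ht.le] using h0.congr_of_eventuallyEq he


lemma global_eq_local_add_const {N n : ℕ} (G : SimpleGraph (Fin N)) [DecidableRel G.Adj]
    (φ : Fin N → EuclideanSpace ℝ (Fin n) → ℝ)
    (ν : Fin N → Fin N → EuclideanSpace ℝ (Fin n))
    (ρ : Fin N → Fin N → ℝ)
    (i : Fin N) (x : Fin N → EuclideanSpace ℝ (Fin n)) :
    ∃ C : ℝ, ∀ v : EuclideanSpace ℝ (Fin n),
      ∑ a, (φ a (Function.update x i v a)
        + ∑ j ∈ G.neighborFinset a,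
            (⟪ν a j, Function.update x i v a - Function.update x i v j⟫
              + ρ a j / 2 * ‖Function.update x i v a - Function.update x i v j‖ ^ 2))
      = (φ i v + ∑ j ∈ G.neighborFinset i,
            (⟪v, ν i j - ν j i⟫ + (ρ i j + ρ j i) / 2 * ‖v - x j‖ ^ 2)) + C := by
  refine ⟨(∑ a ∈ ({i}ᶜ : Finset (Fin N)), (φ a (x a)
      + ∑ j ∈ G.neighborFinset a, (⟪ν a j, x a - x j⟫ + ρ a j / 2 * ‖x a - x j‖ ^ 2)))
    + ∑ j ∈ G.neighborFinset i, (⟪ν j i, x j⟫ - ⟪ν i j, x j⟫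
      - (⟪ν j i, x j - x i⟫ + ρ j i / 2 * ‖x j - x i‖ ^ 2)), fun v => ?_⟩
  rw [Fintype.sum_eq_add_sum_compl i]
  -- simplify the `a = i` term
  have hAi : (φ i (Function.update x i v i)
        + ∑ j ∈ G.neighborFinset i,
            (⟪ν i j, Function.update x i v i - Function.update x i v j⟫
              + ρ i j / 2 * ‖Function.update x i v i - Function.update x i v j‖ ^ 2))
      = φ i v + ∑ j ∈ G.neighborFinset i,
          (⟪ν i j, v - x j⟫ + ρ i j / 2 * ‖v - x j‖ ^ 2) := by
    rw [Function.update_self]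
    congr 1
    refine Finset.sum_congr rfl fun j hj => ?_
    rw [Function.update_of_ne (G.ne_of_adj ((SimpleGraph.mem_neighborFinset G i j).mp hj)).symm]
  -- simplify the `a ≠ i` terms
  have hAa : ∀ a ∈ ({i}ᶜ : Finset (Fin N)),
      (φ a (Function.update x i v a)
        + ∑ j ∈ G.neighborFinset a,
            (⟪ν a j, Function.update x i v a - Function.update x i v j⟫
              + ρ a j / 2 * ‖Function.update x i v a - Function.update x i v j‖ ^ 2))
      = (φ a (x a)
          + ∑ j ∈ G.neighborFinset a, (⟪ν a j, x a - x j⟫ + ρ a j / 2 * ‖x a - x j‖ ^ 2))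
        + (if G.Adj a i then
            (⟪ν a i, x a - v⟫ + ρ a i / 2 * ‖x a - v‖ ^ 2
              - (⟪ν a i, x a - x i⟫ + ρ a i / 2 * ‖x a - x i‖ ^ 2)) else 0) := by
    intro a ha
    have hai : a ≠ i := by simpa using ha
    rw [Function.update_of_ne hai]
    have hsum : ∑ j ∈ G.neighborFinset a,
        (⟪ν a j, x a - Function.update x i v j⟫
          + ρ a j / 2 * ‖x a - Function.update x i v j‖ ^ 2)
        = ∑ j ∈ G.neighborFinset a,
          ((⟪ν a j, x a - x j⟫ + ρ a j / 2 * ‖x a - x j‖ ^ 2)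
            + (if j = i then
                (⟪ν a i, x a - v⟫ + ρ a i / 2 * ‖x a - v‖ ^ 2
                  - (⟪ν a i, x a - x i⟫ + ρ a i / 2 * ‖x a - x i‖ ^ 2)) else 0)) := by
      refine Finset.sum_congr rfl fun j hj => ?_
      by_cases hji : j = i
      · subst hji
        rw [Function.update_self, if_pos rfl]
        ring
      · rw [Function.update_of_ne hji, if_neg hji, add_zero]
    rw [hsum, Finset.sum_add_distrib, Finset.sum_ite_eq' (G.neighborFinset a) i]
    rw [if_congr (SimpleGraph.mem_neighborFinset G a i) rfl rfl]
    ring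
  have hsplit : ∑ a ∈ ({i}ᶜ : Finset (Fin N)),
      ((φ a (x a)
          + ∑ j ∈ G.neighborFinset a, (⟪ν a j, x a - x j⟫ + ρ a j / 2 * ‖x a - x j‖ ^ 2))
        + (if G.Adj a i then
            (⟪ν a i, x a - v⟫ + ρ a i / 2 * ‖x a - v‖ ^ 2
              - (⟪ν a i, x a - x i⟫ + ρ a i / 2 * ‖x a - x i‖ ^ 2)) else 0))
      = (∑ a ∈ ({i}ᶜ : Finset (Fin N)), (φ a (x a)
          + ∑ j ∈ G.neighborFinset a, (⟪ν a j, x a - x j⟫ + ρ a j / 2 * ‖x a - x j‖ ^ 2)))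
        + ∑ a ∈ ({i}ᶜ : Finset (Fin N)), (if G.Adj a i then
            (⟪ν a i, x a - v⟫ + ρ a i / 2 * ‖x a - v‖ ^ 2
              - (⟪ν a i, x a - x i⟫ + ρ a i / 2 * ‖x a - x i‖ ^ 2)) else 0) :=
    Finset.sum_add_distrib
  have hite : ∑ a ∈ ({i}ᶜ : Finset (Fin N)), (if G.Adj a i then
        (⟪ν a i, x a - v⟫ + ρ a i / 2 * ‖x a - v‖ ^ 2
          - (⟪ν a i, x a - x i⟫ + ρ a i / 2 * ‖x a - x i‖ ^ 2)) else 0)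
      = ∑ j ∈ G.neighborFinset i, (⟪ν j i, x j - v⟫ + ρ j i / 2 * ‖x j - v‖ ^ 2
          - (⟪ν j i, x j - x i⟫ + ρ j i / 2 * ‖x j - x i‖ ^ 2)) := by
    have h1 : ∑ a, (if G.Adj a i then
          (⟪ν a i, x a - v⟫ + ρ a i / 2 * ‖x a - v‖ ^ 2
            - (⟪ν a i, x a - x i⟫ + ρ a i / 2 * ‖x a - x i‖ ^ 2)) else 0)
        = (if G.Adj i i then
            (⟪ν i i, x i - v⟫ + ρ i i / 2 * ‖x i - v‖ ^ 2
              - (⟪ν i i, x i - x i⟫ + ρ i i / 2 * ‖x i - x i‖ ^ 2)) else 0)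
          + ∑ a ∈ ({i}ᶜ : Finset (Fin N)), (if G.Adj a i then
              (⟪ν a i, x a - v⟫ + ρ a i / 2 * ‖x a - v‖ ^ 2
                - (⟪ν a i, x a - x i⟫ + ρ a i / 2 * ‖x a - x i‖ ^ 2)) else 0) :=
      Fintype.sum_eq_add_sum_compl i _
    have h2 : ∑ a, (if G.Adj a i then
          (⟪ν a i, x a - v⟫ + ρ a i / 2 * ‖x a - v‖ ^ 2
            - (⟪ν a i, x a - x i⟫ + ρ a i / 2 * ‖x a - x i‖ ^ 2)) else 0)
        = ∑ j ∈ G.neighborFinset i, (⟪ν j i, x j - v⟫ + ρ j i / 2 * ‖x j - v‖ ^ 2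
            - (⟪ν j i, x j - x i⟫ + ρ j i / 2 * ‖x j - x i‖ ^ 2)) := by
      rw [SimpleGraph.neighborFinset_eq_filter, Finset.sum_filter]
      exact Finset.sum_congr rfl fun a _ => if_congr (G.adj_comm a i) rfl rfl
    rw [h1, if_neg (G.irrefl)] at h2
    linarith
  rw [hAi, Finset.sum_congr rfl hAa, hsplit, hite]
  have hkey : (∑ j ∈ G.neighborFinset i,
        (⟪ν i j, v - x j⟫ + ρ i j / 2 * ‖v - x j‖ ^ 2))
      + (∑ j ∈ G.neighborFinset i,
        (⟪ν j i, x j - v⟫ + ρ j i / 2 * ‖x j - v‖ ^ 2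
            - (⟪ν j i, x j - x i⟫ + ρ j i / 2 * ‖x j - x i‖ ^ 2)))
      = (∑ j ∈ G.neighborFinset i,
        (⟪v, ν i j - ν j i⟫ + (ρ i j + ρ j i) / 2 * ‖v - x j‖ ^ 2))
      + ∑ j ∈ G.neighborFinset i,
        (⟪ν j i, x j⟫ - ⟪ν i j, x j⟫
              - (⟪ν j i, x j - x i⟫ + ρ j i / 2 * ‖x j - x i‖ ^ 2)) := by
    rw [← Finset.sum_add_distrib, ← Finset.sum_add_distrib]
    refine Finset.sum_congr rfl fun j _ => ?_
    rw [norm_sub_rev (x j) v]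
    simp only [inner_sub_left, inner_sub_right, real_inner_comm v (ν i j),
      real_inner_comm v (ν j i)]
    ring
  linarith

theorem gradient_global_eq_gradient_local
    (N n : ℕ) (G : SimpleGraph (Fin N)) [DecidableRel G.Adj]
    (mE mI : Fin N → ℕ)
    (f : Fin N → EuclideanSpace ℝ (Fin n) → ℝ)
    (h : (i : Fin N) → EuclideanSpace ℝ (Fin n) → EuclideanSpace ℝ (Fin (mE i)))
    (g : (i : Fin N) → EuclideanSpace ℝ (Fin n) → EuclideanSpace ℝ (Fin (mI i)))
    (hf : ∀ i, ContDiff ℝ 2 (f i)) (hh : ∀ i, ContDiff ℝ 2 (h i))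
    (hg : ∀ i, ContDiff ℝ 2 (g i))
    (ν : Fin N → Fin N → EuclideanSpace ℝ (Fin n))
    (lam : (i : Fin N) → EuclideanSpace ℝ (Fin (mE i)))
    (μ : (i : Fin N) → EuclideanSpace ℝ (Fin (mI i)))
    (hμ : ∀ i k, 0 ≤ μ i k)
    (ρ : Fin N → Fin N → ℝ) (ϱ ζ : Fin N → ℝ)
    (hρ : ∀ i j, G.Adj i j → 0 < ρ i j)
    (hϱ : ∀ i, 0 < ϱ i) (hζ : ∀ i, 0 < ζ i)
    (i : Fin N) (x : Fin N → EuclideanSpace ℝ (Fin n)) :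
    DifferentiableAt ℝ
      (fun v : EuclideanSpace ℝ (Fin n) =>
        ∑ a, (f a (Function.update x i v a)
          + (∑ j ∈ G.neighborFinset a,
              (⟪ν a j, Function.update x i v a - Function.update x i v j⟫
                + ρ a j / 2 * ‖Function.update x i v a - Function.update x i v j‖ ^ 2))
          + ⟪lam a, h a (Function.update x i v a)⟫
          + ϱ a / 2 * ‖h a (Function.update x i v a)‖ ^ 2
          + qpen (ζ a) (μ a) (g a (Function.update x i v a)))) (x i)
    ∧
    DifferentiableAt ℝ
      (fun v : EuclideanSpace ℝ (Fin n) =>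
        f i v
          + (∑ j ∈ G.neighborFinset i,
              (⟪v, ν i j - ν j i⟫ + (ρ i j + ρ j i) / 2 * ‖v - x j‖ ^ 2))
          + ⟪lam i, h i v⟫ + ϱ i / 2 * ‖h i v‖ ^ 2
          + qpen (ζ i) (μ i) (g i v)) (x i)
    ∧
    gradient
      (fun v : EuclideanSpace ℝ (Fin n) =>
        ∑ a, (f a (Function.update x i v a)
          + (∑ j ∈ G.neighborFinset a,
              (⟪ν a j, Function.update x i v a - Function.update x i v j⟫
                + ρ a j / 2 * ‖Function.update x i v a - Function.update x i v j‖ ^ 2))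
          + ⟪lam a, h a (Function.update x i v a)⟫
          + ϱ a / 2 * ‖h a (Function.update x i v a)‖ ^ 2
          + qpen (ζ a) (μ a) (g a (Function.update x i v a)))) (x i)
    =
    gradient
      (fun v : EuclideanSpace ℝ (Fin n) =>
        f i v
          + (∑ j ∈ G.neighborFinset i,
              (⟪v, ν i j - ν j i⟫ + (ρ i j + ρ j i) / 2 * ‖v - x j‖ ^ 2))
          + ⟪lam i, h i v⟫ + ϱ i / 2 * ‖h i v‖ ^ 2
          + qpen (ζ i) (μ i) (g i v)) (x i) := by
  
  classical
  -- the global objective equals the local one plus a constant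
  obtain ⟨C, hC⟩ := global_eq_local_add_const G
    (fun a w => f a w + ⟪lam a, h a w⟫ + ϱ a / 2 * ‖h a w‖ ^ 2 + qpen (ζ a) (μ a) (g a w))
    ν ρ i x
  have hG : (fun v : EuclideanSpace ℝ (Fin n) =>
        ∑ a, (f a (Function.update x i v a)
          + (∑ j ∈ G.neighborFinset a,
              (⟪ν a j, Function.update x i v a - Function.update x i v j⟫
                + ρ a j / 2 * ‖Function.update x i v a - Function.update x i v j‖ ^ 2))
          + ⟪lam a, h a (Function.update x i v a)⟫
          + ϱ a / 2 * ‖h a (Function.update x i v a)‖ ^ 2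
          + qpen (ζ a) (μ a) (g a (Function.update x i v a))))
      = (fun v : EuclideanSpace ℝ (Fin n) =>
        (f i v
          + (∑ j ∈ G.neighborFinset i,
              (⟪v, ν i j - ν j i⟫ + (ρ i j + ρ j i) / 2 * ‖v - x j‖ ^ 2))
          + ⟪lam i, h i v⟫ + ϱ i / 2 * ‖h i v‖ ^ 2
          + qpen (ζ i) (μ i) (g i v)) + C) := by
    funext v
    have h2 := hC v
    rw [show (∑ a, (f a (Function.update x i v a)
          + (∑ j ∈ G.neighborFinset a,
              (⟪ν a j, Function.update x i v a - Function.update x i v j⟫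
                + ρ a j / 2 * ‖Function.update x i v a - Function.update x i v j‖ ^ 2))
          + ⟪lam a, h a (Function.update x i v a)⟫
          + ϱ a / 2 * ‖h a (Function.update x i v a)‖ ^ 2
          + qpen (ζ a) (μ a) (g a (Function.update x i v a))))
        = ∑ a, ((f a (Function.update x i v a)
            + ⟪lam a, h a (Function.update x i v a)⟫
            + ϱ a / 2 * ‖h a (Function.update x i v a)‖ ^ 2
            + qpen (ζ a) (μ a) (g a (Function.update x i v a)))
          + ∑ j ∈ G.neighborFinset a,
              (⟪ν a j, Function.update x i v a - Function.update x i v j⟫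
                + ρ a j / 2 * ‖Function.update x i v a - Function.update x i v j‖ ^ 2))
      from Finset.sum_congr rfl fun a _ => by ring, h2]
    ring
  -- differentiability of the local objective at `x i`
  have dh : DifferentiableAt ℝ (h i) (x i) := ((hh i).differentiable two_ne_zero).differentiableAt
  have dg : DifferentiableAt ℝ (g i) (x i) := ((hg i).differentiable two_ne_zero).differentiableAt
  have dLoc : DifferentiableAt ℝ
      (fun v : EuclideanSpace ℝ (Fin n) =>
        f i v
          + (∑ j ∈ G.neighborFinset i,
              (⟪v, ν i j - ν j i⟫ + (ρ i j + ρ j i) / 2 * ‖v - x j‖ ^ 2))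
          + ⟪lam i, h i v⟫ + ϱ i / 2 * ‖h i v‖ ^ 2
          + qpen (ζ i) (μ i) (g i v)) (x i) := by
    have d1 : DifferentiableAt ℝ (f i) (x i) :=
      ((hf i).differentiable two_ne_zero).differentiableAt
    have d2 : DifferentiableAt ℝ
        (fun v : EuclideanSpace ℝ (Fin n) =>
          ∑ j ∈ G.neighborFinset i,
            (⟪v, ν i j - ν j i⟫ + (ρ i j + ρ j i) / 2 * ‖v - x j‖ ^ 2)) (x i) := by
      refine DifferentiableAt.fun_sum fun j _ => DifferentiableAt.add ?_ ?_
      · exact differentiableAt_fun_id.inner ℝ (differentiableAt_const _)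
      · exact ((differentiableAt_fun_id.sub_const (x j)).norm_sq ℝ).const_mul _
    have d3 : DifferentiableAt ℝ
        (fun v : EuclideanSpace ℝ (Fin n) => ⟪lam i, h i v⟫) (x i) :=
      (differentiableAt_const (lam i)).inner ℝ dh
    have d4 : DifferentiableAt ℝ
        (fun v : EuclideanSpace ℝ (Fin n) => ϱ i / 2 * ‖h i v‖ ^ 2) (x i) :=
      (dh.norm_sq ℝ).const_mul _
    have d5 : DifferentiableAt ℝ
        (fun v : EuclideanSpace ℝ (Fin n) => qpen (ζ i) (μ i) (g i v)) (x i) := by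
      unfold qpen
      refine DifferentiableAt.fun_sum fun k _ => DifferentiableAt.const_mul ?_ _
      refine DifferentiableAt.sub_const ?_ _
      have dcomp : DifferentiableAt ℝ
          (fun v : EuclideanSpace ℝ (Fin n) => μ i k + ζ i * (g i v) k) (x i) := by
        refine (differentiableAt_const _).add (DifferentiableAt.const_mul ?_ _)
        exact ((EuclideanSpace.proj (𝕜 := ℝ) k).differentiableAt).comp (x i) dg
      exact (hasDerivAt_max_zero_sq _).differentiableAt.comp (x i) dcomp
    exact (((d1.add d2).add d3).add d4).add d5
  refine ⟨?_, dLoc, ?_⟩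
  · rw [hG]
    exact dLoc.add_const C
  · rw [hG]
    unfold gradient
    rw [fderiv_add_const]
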